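/- Let X, Y be real normed linear spaces, η ∈ [0,1), and T : X → Y a nonzero linear map. If T is B D^η-preserving (i.e., for all x, y ∈ X, x ⊥_B y implies ‖Tx + λTy‖ ≥ √(1 − η²)·‖Tx‖ for all λ ∈ ℝ), then T is bounded: there exists C > 0 with ‖Tx‖ ≤ C‖x‖ for all x ∈ X. -/

import Mathlib

set_option maxHeartbeats 1000000

theorem stmt_2 {X Y : Type*} [NormedAddCommGroup X] [NormedSpace ℝ X]
    [NormedAddCommGroup Y] [NormedSpace ℝ Y]
    (η : ℝ) (hη : 0 ≤ η) (hη1 : η < 1)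
    (T : X →ₗ[ℝ] Y) (hT : T ≠ 0)
    (hpres : ∀ x y : X, (∀ l : ℝ, ‖x + l • y‖ ≥ ‖x‖) →
      ∀ l : ℝ, ‖T x + l • T y‖ ≥ Real.sqrt (1 - η ^ 2) * ‖T x‖) :
    ∃ C : ℝ, 0 < C ∧ ∀ x : X, ‖T x‖ ≤ C * ‖x‖ := by
  set c := Real.sqrt (1 - η ^ 2) with hc_def
  have hc2 : c ^ 2 = 1 - η ^ 2 := Real.sq_sqrt (by nlinarith)
  have hc : 0 < c := Real.sqrt_pos.mpr (by nlinarith)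
  have hc1 : c ≤ 1 := by nlinarith [sq_nonneg (c - 1), sq_nonneg η]
  -- pick a unit vector e with T e ≠ 0
  obtain ⟨x₀, hx₀⟩ : ∃ x, T x ≠ 0 := by
    by_contra h
    push_neg at h
    exact hT (LinearMap.ext fun x => by simp [h x])
  have hx₀0 : x₀ ≠ 0 := by
    intro h
    exact hx₀ (by simp [h])
  have hnx₀ : (0:ℝ) < ‖x₀‖ := norm_pos_iff.mpr hx₀0
  obtain ⟨e, he, hTe⟩ : ∃ e : X, ‖e‖ = 1 ∧ 0 < ‖T e‖ := by
    refine ⟨‖x₀‖⁻¹ • x₀, ?_, ?_⟩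
    · rw [norm_smul, norm_inv, norm_norm]
      field_simp
    · rw [map_smul, norm_smul, norm_inv, norm_norm]
      exact mul_pos (inv_pos.mpr hnx₀) (norm_pos_iff.mpr hx₀)
  have hE1 : ‖T e‖ / c ≤ ‖T e‖ / c ^ 2 := by
    apply div_le_div_of_nonneg_left hTe.le (by positivity)
    nlinarith
  have hE2 : ‖T e‖ ≤ ‖T e‖ / c ^ 2 := by
    rw [le_div_iff₀ (by positivity)]
    nlinarith [hTe.le]
  -- key uniform bound on the unit sphere
  have key : ∀ y : X, ‖y‖ = 1 → ‖T y‖ ≤ 12 / c ^ 2 * ‖T e‖ := by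
    intro y hy
    have hgoal_eq : 12 / c ^ 2 * ‖T e‖ = 12 * (‖T e‖ / c ^ 2) := by ring
    -- find the minimizer of σ ↦ ‖e + σ • y‖
    have hcont : Continuous fun σ : ℝ => ‖e + σ • y‖ := by fun_prop
    obtain ⟨σ, hσmem, hσmin⟩ :=
      (isCompact_Icc (a := (-2:ℝ)) (b := 2)).exists_isMinOn ⟨0, by norm_num⟩
        hcont.continuousOn
    have hσmin' := isMinOn_iff.mp hσmin
    have hmin : ∀ τ : ℝ, ‖e + σ • y‖ ≤ ‖e + τ • y‖ := by
      intro τ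
      by_cases hτ : τ ∈ Set.Icc (-2:ℝ) 2
      · exact hσmin' τ hτ
      · have h0 : ‖e + σ • y‖ ≤ 1 := by
          have := hσmin' 0 (by norm_num)
          simpa [he] using this
        have habs : 2 < |τ| := by
          simp only [Set.mem_Icc, not_and_or, not_le] at hτ
          rcases hτ with h | h
          · rw [abs_of_neg (by linarith)]; linarith
          · rw [abs_of_pos (by linarith)]; linarith
        have h1 : |τ| - 1 ≤ ‖e + τ • y‖ := by
          have h2 := norm_sub_norm_le (τ • y) (-e)
          have h3 : ‖τ • y‖ = |τ| := by rw [norm_smul, hy, Real.norm_eq_abs, mul_one]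
          have h4 : τ • y - -e = e + τ • y := by abel
          rw [h4, h3] at h2
          simpa [he] using h2
        linarith
    set u : X := e + σ • y with hu_def
    have hu_orth : ∀ l : ℝ, ‖u + l • y‖ ≥ ‖u‖ := by
      intro l
      have h5 := hmin (σ + l)
      rw [add_smul, ← add_assoc] at h5
      exact h5
    have h1 := hpres u y hu_orth
    have hTu : T u = T e + σ • T y := by rw [hu_def, map_add, map_smul]
    have hTe_ge : c * ‖T u‖ ≤ ‖T e‖ := by
      have h6 := h1 (-σ)
      have heq : T u + (-σ) • T y = T e := by rw [hTu, neg_smul]; abel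
      rw [heq] at h6
      exact h6
    have hTu_le : ‖T u‖ ≤ ‖T e‖ / c := by
      rw [le_div_iff₀ hc]
      linarith [mul_comm ‖T u‖ c, hTe_ge]
    by_cases hm : ‖u‖ < 1/2
    · -- case 1 : |σ| ≥ 1/2, direct bound
      have hσ_lb : 1/2 ≤ |σ| := by
        have h7 : ‖e‖ - ‖u‖ ≤ ‖e - u‖ := norm_sub_norm_le e u
        have h8 : ‖e - u‖ = |σ| := by
          rw [show e - u = -(σ • y) by rw [hu_def]; abel, norm_neg, norm_smul, hy,
            Real.norm_eq_abs, mul_one]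
        rw [he, h8] at h7
        linarith
      have h9 : ‖T u - T e‖ = |σ| * ‖T y‖ := by
        rw [show T u - T e = σ • T y by rw [hTu]; abel, norm_smul, Real.norm_eq_abs]
      have h10 : ‖T u - T e‖ ≤ ‖T u‖ + ‖T e‖ := norm_sub_le _ _
      have hbound : |σ| * ‖T y‖ ≤ ‖T e‖ / c + ‖T e‖ := by
        rw [← h9]
        linarith
      have hTy : ‖T y‖ ≤ 2 * (‖T e‖ / c + ‖T e‖) := by
        nlinarith [norm_nonneg (T y), mul_le_mul_of_nonneg_right hσ_lb (norm_nonneg (T y))]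
      rw [hgoal_eq]
      linarith
    · -- case 2 : ‖u‖ ≥ 1/2, use a norming functional
      push_neg at hm
      set r : ℝ := ‖u‖ / 2 with hr_def
      have hr_pos : 0 < r := by rw [hr_def]; linarith
      have hr_lb : 1/4 ≤ r := by rw [hr_def]; linarith
      set w : X := u + r • y with hw_def
      have hw_ge : ‖u‖ ≤ ‖w‖ := hu_orth r
      have hw0 : w ≠ 0 := by
        intro h
        rw [h, norm_zero] at hw_ge
        linarith
      obtain ⟨f, hf1, hfw⟩ := exists_dual_vector ℝ w (norm_ne_zero_iff.mpr hw0)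
      have hfy_le : |f y| ≤ 1 := by
        have h11 := f.le_opNorm y
        rw [hf1, hy, one_mul] at h11
        simpa [Real.norm_eq_abs] using h11
      have hfw' : f w = ‖w‖ := by exact_mod_cast hfw
      have hfu_eq : f u = ‖w‖ - r * f y := by
        have h12 : f w = f u + r * f y := by
          rw [hw_def, map_add, map_smul, smul_eq_mul]
        linarith
      have hfu_lb : ‖u‖ / 2 ≤ f u := by
        have h13 : r * f y ≤ r * 1 :=
          mul_le_mul_of_nonneg_left (abs_le.mp hfy_le).2 hr_pos.le
        rw [hfu_eq]
        linarith
      have hfu_pos : 0 < f u := by linarith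
      set v : X := (f y) • u - (f u) • y with hv_def
      have hfv : f v = 0 := by
        rw [hv_def, map_sub, map_smul, map_smul, smul_eq_mul, smul_eq_mul]
        ring
      have hw_orth : ∀ l : ℝ, ‖w + l • v‖ ≥ ‖w‖ := by
        intro l
        have h14 : f (w + l • v) = ‖w‖ := by
          rw [map_add, map_smul, smul_eq_mul, hfv, mul_zero, add_zero, hfw']
        have h15 : f (w + l • v) ≤ ‖w + l • v‖ := by
          have h16 := f.le_opNorm (w + l • v)
          rw [hf1, one_mul] at h16
          calc f (w + l • v) ≤ |f (w + l • v)| := le_abs_self _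
            _ ≤ ‖w + l • v‖ := by simpa [Real.norm_eq_abs] using h16
        linarith
      have h2 := hpres w v hw_orth
      set l₀ : ℝ := r / f u with hl₀_def
      have hl₀_pos : 0 < l₀ := div_pos hr_pos hfu_pos
      have hl₀_le : l₀ ≤ 1 := by
        rw [hl₀_def, div_le_one hfu_pos, hr_def]
        linarith [hfu_lb]
      have hTw : T w = T u + r • T y := by rw [hw_def, map_add, map_smul]
      have hTv : T v = (f y) • T u - (f u) • T y := by
        rw [hv_def, map_sub, map_smul, map_smul]
      have hl₀fu : l₀ * f u = r := by
        rw [hl₀_def]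
        field_simp
      have hcomb : T w + l₀ • T v = (1 + l₀ * f y) • T u := by
        rw [hTw, hTv, smul_sub, smul_smul, smul_smul, hl₀fu, add_smul, one_smul]
        abel
      have hTw_le : c * ‖T w‖ ≤ 2 * ‖T u‖ := by
        have h17 := h2 l₀
        rw [hcomb] at h17
        have h18 : |1 + l₀ * f y| ≤ 2 := by
          have h19 := abs_le.mp hfy_le
          rw [abs_le]
          constructor <;> nlinarith [hl₀_pos.le, hl₀_le, h19.1, h19.2]
        have h20 : ‖(1 + l₀ * f y) • T u‖ ≤ 2 * ‖T u‖ := by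
          rw [norm_smul, Real.norm_eq_abs]
          exact mul_le_mul_of_nonneg_right h18 (norm_nonneg _)
        linarith
      have hrTy : r * ‖T y‖ ≤ (2 / c + 1) * ‖T u‖ := by
        have h21 : ‖T w - T u‖ = r * ‖T y‖ := by
          rw [show T w - T u = r • T y by rw [hTw]; abel, norm_smul, Real.norm_eq_abs,
            abs_of_pos hr_pos]
        have h22 : ‖T w - T u‖ ≤ ‖T w‖ + ‖T u‖ := norm_sub_le _ _
        have h23 : ‖T w‖ ≤ 2 / c * ‖T u‖ := by
          rw [div_mul_eq_mul_div, le_div_iff₀ hc]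
          linarith [mul_comm ‖T w‖ c, hTw_le]
        rw [h21] at h22
        have h25 : (2 / c + 1) * ‖T u‖ = 2 / c * ‖T u‖ + ‖T u‖ := by ring
        linarith
      have hco : (0:ℝ) ≤ 2 / c + 1 := by positivity
      have h24 : (2 / c + 1) * ‖T u‖ ≤ (2 / c + 1) * (‖T e‖ / c) :=
        mul_le_mul_of_nonneg_left hTu_le hco
      have hTy_le : ‖T y‖ ≤ 4 * ((2 / c + 1) * (‖T e‖ / c)) := by
        have h26 := mul_le_mul_of_nonneg_right hr_lb (norm_nonneg (T y))
        linarith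
      have hexp : 4 * ((2 / c + 1) * (‖T e‖ / c)) = 8 * (‖T e‖ / c ^ 2) + 4 * (‖T e‖ / c) := by
        field_simp
        ring
      rw [hgoal_eq]
      rw [hexp] at hTy_le
      linarith
  -- conclude
  refine ⟨12 / c ^ 2 * ‖T e‖, by positivity, fun x => ?_⟩
  by_cases hx : x = 0
  · simp [hx]
  · have hnx : (0:ℝ) < ‖x‖ := norm_pos_iff.mpr hx
    have hy : ‖‖x‖⁻¹ • x‖ = 1 := by
      rw [norm_smul, norm_inv, norm_norm]
      field_simp
    have hk := key (‖x‖⁻¹ • x) hy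
    rw [map_smul, norm_smul, norm_inv, norm_norm] at hk
    calc ‖T x‖ = ‖x‖ * (‖x‖⁻¹ * ‖T x‖) := by field_simp
      _ ≤ ‖x‖ * (12 / c ^ 2 * ‖T e‖) := mul_le_mul_of_nonneg_left hk hnx.le
      _ = 12 / c ^ 2 * ‖T e‖ * ‖x‖ := by ring
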